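/- Let g ≥ 2 be an integer, let k₁, k₂ ≥ 1 be integers, let t₁, w₁, t₂, w₂ be non-zero integers, and put C := max{g, |t₁|, |w₁|, |t₂|, |w₂|}. Let Δ = gcd(t₁·g^{k₁} − w₁, t₂·g^{k₂} − w₂) and let X be any real number with X ≥ max{k₁, k₂, 3}. If the rational numbers t₁·g^{k₁}/w₁ and t₂·g^{k₂}/w₂ are multiplicatively independent, then Δ ≤ 2·C^{2 + 5√X}. -/

import Mathlib

/-- Two non-zero rationals are multiplicatively independent if
`α^u * β^v = 1` (with integer exponents) forces `u = v = 0`. -/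
def MultIndep (α β : ℚ) : Prop :=
  ∀ u v : ℤ, α ^ u * β ^ v = 1 → u = 0 ∧ v = 0

lemma multIndep_symm {α β : ℚ} (h : MultIndep α β) : MultIndep β α := by
  intro u v huv
  have := h v u (by rw [mul_comm]; exact huv)
  exact ⟨this.2, this.1⟩

lemma d_ne_zero {g t₁ w₁ t₂ w₂ : ℤ} {k₁ k₂ : ℕ} (hw₁ : w₁ ≠ 0)
    (hind : MultIndep ((t₁ * g ^ k₁ : ℤ) / (w₁ : ℚ)) ((t₂ * g ^ k₂ : ℤ) / (w₂ : ℚ))) :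
    t₁ * g ^ k₁ - w₁ ≠ 0 := by
  intro h
  have hx : t₁ * g ^ k₁ = w₁ := by omega
  have hα : ((t₁ * g ^ k₁ : ℤ) : ℚ) / (w₁ : ℚ) = 1 := by
    rw [hx]; exact div_self (by exact_mod_cast hw₁)
  have := hind 1 0 (by rw [hα]; norm_num)
  exact one_ne_zero this.1

lemma M_ne_zero {g t₁ w₁ t₂ w₂ : ℤ} {k₁ k₂ a b D : ℕ}
    (hg : 2 ≤ g) (ht₁ : t₁ ≠ 0) (hw₁ : w₁ ≠ 0) (ht₂ : t₂ ≠ 0) (hw₂ : w₂ ≠ 0)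
    (ha : 1 ≤ a) (hD : a * k₁ = b * k₂ + D)
    (hind : MultIndep ((t₁ * g ^ k₁ : ℤ) / (w₁ : ℚ)) ((t₂ * g ^ k₂ : ℤ) / (w₂ : ℚ))) :
    t₁ ^ a * w₂ ^ b * g ^ D - w₁ ^ a * t₂ ^ b ≠ 0 := by
  intro h
  have hg0 : g ≠ 0 := by omega
  have heq : t₁ ^ a * w₂ ^ b * g ^ D = w₁ ^ a * t₂ ^ b := by omega
  set α : ℚ := ((t₁ * g ^ k₁ : ℤ) : ℚ) / (w₁ : ℚ) with hαdef
  set β : ℚ := ((t₂ * g ^ k₂ : ℤ) : ℚ) / (w₂ : ℚ) with hβdef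
  have hβ0 : β ≠ 0 := by
    rw [hβdef]
    apply div_ne_zero
    · exact_mod_cast mul_ne_zero ht₂ (pow_ne_zero _ hg0)
    · exact_mod_cast hw₂
  -- integer identity: (t₁ g^k₁)^a * w₂^b = (t₂ g^k₂)^b * w₁^a
  have hint : (t₁ * g ^ k₁) ^ a * w₂ ^ b = (t₂ * g ^ k₂) ^ b * w₁ ^ a := by
    have h1 : (t₁ * g ^ k₁) ^ a = t₁ ^ a * (g ^ (b * k₂) * g ^ D) := by
      rw [mul_pow, ← pow_mul, ← pow_add, mul_comm k₁ a, hD]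
    have h2 : (t₂ * g ^ k₂) ^ b = t₂ ^ b * g ^ (b * k₂) := by
      rw [mul_pow, ← pow_mul, mul_comm k₂ b]
    rw [h1, h2]
    calc t₁ ^ a * (g ^ (b * k₂) * g ^ D) * w₂ ^ b
        = t₁ ^ a * w₂ ^ b * g ^ D * g ^ (b * k₂) := by ring
      _ = w₁ ^ a * t₂ ^ b * g ^ (b * k₂) := by rw [heq]
      _ = t₂ ^ b * g ^ (b * k₂) * w₁ ^ a := by ring
  have hαβ : α ^ a = β ^ b := by
    rw [hαdef, hβdef, div_pow, div_pow, div_eq_div_iff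
      (by exact_mod_cast pow_ne_zero a hw₁) (by exact_mod_cast pow_ne_zero b hw₂)]
    exact_mod_cast congrArg (fun n : ℤ => (n : ℚ)) hint
  have hone : α ^ (a : ℤ) * β ^ (-(b : ℤ)) = 1 := by
    rw [zpow_neg, zpow_natCast, zpow_natCast, hαβ]
    exact mul_inv_cancel₀ (pow_ne_zero _ hβ0)
  have := hind (a : ℤ) (-(b : ℤ)) hone
  have : (a : ℤ) = 0 := this.1
  omega

lemma pigeon (k₁ k₂ m T : ℕ) (hT : 0 < T)
    (hcard : m * (k₁ + k₂) < (m * m + 2 * m) * T) :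
    ∃ A B : ℤ, (A ≠ 0 ∨ B ≠ 0) ∧ |A| ≤ m ∧ |B| ≤ m ∧
      |A * k₁ - B * k₂| < T := by
  classical
  set s : Finset (ℕ × ℕ) := Finset.range (m + 1) ×ˢ Finset.range (m + 1) with hs
  set val : ℕ × ℕ → ℕ := fun q => q.1 * k₁ + (m - q.2) * k₂ with hval
  set f : ℕ × ℕ → ℕ := fun q => val q / T with hf
  set t : Finset ℕ := Finset.range (m * (k₁ + k₂) / T + 1) with ht
  have hmaps : ∀ q ∈ s, f q ∈ t := by
    intro q hq
    rw [hs, Finset.mem_product, Finset.mem_range, Finset.mem_range] at hq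
    rw [ht, Finset.mem_range, Nat.lt_succ_iff, hf]
    apply Nat.div_le_div_right
    have h1 : q.1 * k₁ ≤ m * k₁ := Nat.mul_le_mul_right _ (by omega)
    have h2 : (m - q.2) * k₂ ≤ m * k₂ := Nat.mul_le_mul_right _ (by omega)
    calc val q ≤ m * k₁ + m * k₂ := add_le_add h1 h2
      _ = m * (k₁ + k₂) := by ring
  have hlt : t.card < s.card := by
    rw [ht, hs, Finset.card_range, Finset.card_product, Finset.card_range]
    have : m * (k₁ + k₂) / T < m * m + 2 * m := by
      rw [Nat.div_lt_iff_lt_mul hT]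
      calc m * (k₁ + k₂) < (m * m + 2 * m) * T := hcard
        _ = (m * m + 2 * m) * T := rfl
    calc m * (k₁ + k₂) / T + 1 ≤ m * m + 2 * m := by omega
      _ < (m + 1) * (m + 1) := by nlinarith
  obtain ⟨q₁, hq₁, q₂, hq₂, hne, hfeq⟩ :=
    Finset.exists_ne_map_eq_of_card_lt_of_maps_to hlt hmaps
  rw [hs, Finset.mem_product, Finset.mem_range, Finset.mem_range, Nat.lt_succ_iff,
    Nat.lt_succ_iff] at hq₁ hq₂
  -- same bucket ⇒ values within T
  have hclose : ∀ r₁ r₂ : ℕ × ℕ, f r₁ = f r₂ → val r₁ < val r₂ + T := by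
    intro r₁ r₂ hfr
    have h1 : val r₁ < (val r₁ / T + 1) * T := by
      rw [← Nat.div_lt_iff_lt_mul hT]; omega
    have h2 : val r₂ / T * T ≤ val r₂ := Nat.div_mul_le_self _ _
    have : val r₁ / T = val r₂ / T := hfr
    calc val r₁ < (val r₂ / T + 1) * T := by rw [← this]; exact h1
      _ = val r₂ / T * T + T := by ring
      _ ≤ val r₂ + T := by omega
  refine ⟨(q₁.1 : ℤ) - q₂.1, (q₁.2 : ℤ) - q₂.2, ?_, ?_, ?_, ?_⟩
  · by_contra hcon
    push_neg at hcon
    apply hne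
    have e1 : q₁.1 = q₂.1 := by have := hcon.1; omega
    have e2 : q₁.2 = q₂.2 := by have := hcon.2; omega
    exact Prod.ext e1 e2
  · rw [abs_le]; constructor <;> [skip; skip] <;> omega
  · rw [abs_le]; constructor <;> [skip; skip] <;> omega
  · have hv : ((q₁.1 : ℤ) - q₂.1) * k₁ - ((q₁.2 : ℤ) - q₂.2) * k₂
        = (val q₁ : ℤ) - val q₂ := by
      rw [hval]
      push_cast [Nat.cast_sub hq₁.2, Nat.cast_sub hq₂.2]
      ring
    rw [hv, abs_lt]
    have h12 := hclose q₁ q₂ hfeq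
    have h21 := hclose q₂ q₁ hfeq.symm
    constructor <;> [skip; skip] <;> (push_cast; omega)

/-- cast dvd helper -/
lemma intCast_pow_dvd_iff {p : ℕ} (hp : p.Prime) (k : ℕ) {n : ℤ} (hn : n ≠ 0) :
    (p : ℤ) ^ k ∣ n ↔ k ≤ n.natAbs.factorization p := by
  rw [← hp.pow_dvd_iff_le_factorization (Int.natAbs_ne_zero.mpr hn)]
  rw [← Int.natCast_dvd_natCast (m := p ^ k) (n := n.natAbs), Int.dvd_natAbs]
  push_cast
  rfl

lemma int_ordProj_dvd (p : ℕ) (n : ℤ) : (p : ℤ) ^ (n.natAbs.factorization p) ∣ n := by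
  have h := Nat.ordProj_dvd n.natAbs p
  have : ((p ^ n.natAbs.factorization p : ℕ) : ℤ) ∣ (n.natAbs : ℤ) := Int.natCast_dvd_natCast.mpr h
  rw [Int.dvd_natAbs] at this
  exact_mod_cast this

lemma pow_sub_pow_dvd_aux (p x y : ℤ) (e β a : ℕ)
    (hxy : p ^ e ∣ x - y) (hx : p ^ β ∣ x) (hy : p ^ β ∣ y) :
    p ^ (e + (a - 1) * β) ∣ x ^ a - y ^ a := by
  rw [← geom_sum₂_mul x y a, pow_add, mul_comm (p ^ e)]
  refine mul_dvd_mul (Finset.dvd_sum fun i hi => ?_) hxy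
  have hi' : i ≤ a - 1 := by
    have := Finset.mem_range.mp hi; omega
  have h1 : p ^ (i * β) ∣ x ^ i := by
    rw [mul_comm, pow_mul]; exact pow_dvd_pow_of_dvd hx i
  have h2 : p ^ ((a - 1 - i) * β) ∣ y ^ (a - 1 - i) := by
    rw [mul_comm, pow_mul]; exact pow_dvd_pow_of_dvd hy _
  have : (a - 1) * β = i * β + (a - 1 - i) * β := by
    rw [← Nat.add_mul]; congr 1; omega
  rw [this, pow_add]
  exact mul_dvd_mul h1 h2

lemma core_dvd (g t₁ w₁ t₂ w₂ : ℤ) (k₁ k₂ a b D : ℕ)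
    (hg : 2 ≤ g) (ht₁ : t₁ ≠ 0) (hw₁ : w₁ ≠ 0) (ht₂ : t₂ ≠ 0) (hw₂ : w₂ ≠ 0)
    (ha : 1 ≤ a) (hb : 1 ≤ b) (hD : a * k₁ = b * k₂ + D)
    (hd₁ : t₁ * g ^ k₁ - w₁ ≠ 0)
    (hM : t₁ ^ a * w₂ ^ b * g ^ D - w₁ ^ a * t₂ ^ b ≠ 0) :
    (Int.gcd (t₁ * g ^ k₁ - w₁) (t₂ * g ^ k₂ - w₂) : ℤ) ∣
      w₁ * (w₂ * (t₁ ^ a * w₂ ^ b * g ^ D - w₁ ^ a * t₂ ^ b)) := by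
  have hg0 : g ≠ 0 := by omega
  set x := t₁ * g ^ k₁ with hx
  set z := t₂ * g ^ k₂ with hz
  set M := t₁ ^ a * w₂ ^ b * g ^ D - w₁ ^ a * t₂ ^ b with hMdef
  set N := w₁ * (w₂ * M) with hN
  set Δ := Int.gcd (x - w₁) (z - w₂) with hΔ
  have hx0 : x ≠ 0 := mul_ne_zero ht₁ (pow_ne_zero _ hg0)
  have hz0 : z ≠ 0 := mul_ne_zero ht₂ (pow_ne_zero _ hg0)
  have hΔ0 : Δ ≠ 0 := by
    rw [hΔ, Ne, Int.gcd_eq_zero_iff]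
    intro ⟨h1, _⟩; exact hd₁ h1
  have hN0 : N ≠ 0 := mul_ne_zero hw₁ (mul_ne_zero hw₂ hM)
  suffices h : Δ ∣ N.natAbs by
    rw [← Int.dvd_natAbs]; exact_mod_cast h
  rw [← Nat.factorization_le_iff_dvd hΔ0 (Int.natAbs_ne_zero.mpr hN0), Finsupp.le_def]
  intro p
  by_cases hp : p.Prime
  · -- main case
    set e := Δ.factorization p with he
    -- p^e divides both differences
    have hpΔ : (p : ℤ) ^ e ∣ (Δ : ℤ) := by
      exact_mod_cast Int.natCast_dvd_natCast.mpr (Nat.ordProj_dvd Δ p)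
    have hpd₁ : (p : ℤ) ^ e ∣ x - w₁ := hpΔ.trans (Int.gcd_dvd_left _ _)
    have hpd₂ : (p : ℤ) ^ e ∣ z - w₂ := hpΔ.trans (Int.gcd_dvd_right _ _)
    set β₁ := x.natAbs.factorization p with hβ₁
    set β₂ := z.natAbs.factorization p with hβ₂
    have hvN : N.natAbs.factorization p =
        w₁.natAbs.factorization p + (w₂.natAbs.factorization p + M.natAbs.factorization p) := by
      rw [hN, Int.natAbs_mul, Int.natAbs_mul,
        Nat.factorization_mul (Int.natAbs_ne_zero.mpr hw₁)
          (Nat.mul_ne_zero (Int.natAbs_ne_zero.mpr hw₂) (Int.natAbs_ne_zero.mpr hM)),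
        Nat.factorization_mul (Int.natAbs_ne_zero.mpr hw₂) (Int.natAbs_ne_zero.mpr hM)]
      rfl
    rw [hvN]
    by_cases h1 : e ≤ β₁
    · -- p^e ∣ w₁
      have hpx : (p : ℤ) ^ e ∣ x := (pow_dvd_pow _ h1).trans (int_ordProj_dvd p x)
      have hpw : (p : ℤ) ^ e ∣ w₁ := by
        have := dvd_sub hpx hpd₁; simpa using this
      have := (intCast_pow_dvd_iff hp e hw₁).mp hpw
      omega
    by_cases h2 : e ≤ β₂
    · have hpz : (p : ℤ) ^ e ∣ z := (pow_dvd_pow _ h2).trans (int_ordProj_dvd p z)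
      have hpw : (p : ℤ) ^ e ∣ w₂ := by
        have := dvd_sub hpz hpd₂; simpa using this
      have := (intCast_pow_dvd_iff hp e hw₂).mp hpw
      omega
    push_neg at h1 h2
    -- bad case: β₁ < e, β₂ < e
    obtain ⟨a', rfl⟩ : ∃ a', a = a' + 1 := ⟨a - 1, by omega⟩
    obtain ⟨b', rfl⟩ : ∃ b', b = b' + 1 := ⟨b - 1, by omega⟩
    have hpβ₁x : (p : ℤ) ^ β₁ ∣ x := int_ordProj_dvd p x
    have hpβ₂z : (p : ℤ) ^ β₂ ∣ z := int_ordProj_dvd p z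
    have hpβ₁w : (p : ℤ) ^ β₁ ∣ w₁ := by
      have hd : (p : ℤ) ^ β₁ ∣ x - w₁ := (pow_dvd_pow _ h1.le).trans hpd₁
      have := dvd_sub hpβ₁x hd; simpa using this
    have hpβ₂w : (p : ℤ) ^ β₂ ∣ w₂ := by
      have hd : (p : ℤ) ^ β₂ ∣ z - w₂ := (pow_dvd_pow _ h2.le).trans hpd₂
      have := dvd_sub hpβ₂z hd; simpa using this
    -- key powers
    have hkey1 : (p : ℤ) ^ (e + a' * β₁) ∣ x ^ (a' + 1) - w₁ ^ (a' + 1) := by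
      have := pow_sub_pow_dvd_aux (p : ℤ) x w₁ e β₁ (a' + 1) hpd₁ hpβ₁x hpβ₁w
      simpa using this
    have hkey2 : (p : ℤ) ^ (e + b' * β₂) ∣ z ^ (b' + 1) - w₂ ^ (b' + 1) := by
      have := pow_sub_pow_dvd_aux (p : ℤ) z w₂ e β₂ (b' + 1) hpd₂ hpβ₂z hpβ₂w
      simpa using this
    set E := e + a' * β₁ + b' * β₂ with hE
    have hE1 : (p : ℤ) ^ E ∣ w₂ ^ (b' + 1) * (x ^ (a' + 1) - w₁ ^ (a' + 1)) := by
      have hw2pow : (p : ℤ) ^ (b' * β₂) ∣ w₂ ^ (b' + 1) := by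
        have : (p : ℤ) ^ (b' * β₂) ∣ w₂ ^ b' := by
          rw [mul_comm, pow_mul]; exact pow_dvd_pow_of_dvd hpβ₂w b'
        calc (p : ℤ) ^ (b' * β₂) ∣ w₂ ^ b' := this
          _ ∣ w₂ ^ (b' + 1) := pow_dvd_pow _ (by omega)
      have h5 := mul_dvd_mul hw2pow hkey1
      rw [← pow_add] at h5
      refine (pow_dvd_pow _ (show E ≤ b' * β₂ + (e + a' * β₁) by omega)).trans h5
    have hE2 : (p : ℤ) ^ E ∣ w₁ ^ (a' + 1) * (z ^ (b' + 1) - w₂ ^ (b' + 1)) := by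
      have hw1pow : (p : ℤ) ^ (a' * β₁) ∣ w₁ ^ (a' + 1) := by
        have : (p : ℤ) ^ (a' * β₁) ∣ w₁ ^ a' := by
          rw [mul_comm, pow_mul]; exact pow_dvd_pow_of_dvd hpβ₁w a'
        calc (p : ℤ) ^ (a' * β₁) ∣ w₁ ^ a' := this
          _ ∣ w₁ ^ (a' + 1) := pow_dvd_pow _ (by omega)
      have h5 := mul_dvd_mul hw1pow hkey2
      rw [← pow_add] at h5
      refine (pow_dvd_pow _ (show E ≤ a' * β₁ + (e + b' * β₂) by omega)).trans h5
    have hident : w₂ ^ (b' + 1) * (x ^ (a' + 1) - w₁ ^ (a' + 1)) -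
        w₁ ^ (a' + 1) * (z ^ (b' + 1) - w₂ ^ (b' + 1)) = g ^ ((b' + 1) * k₂) * M := by
      have hxpow : x ^ (a' + 1) = t₁ ^ (a' + 1) * (g ^ ((b' + 1) * k₂) * g ^ D) := by
        rw [hx, mul_pow, ← pow_mul, ← pow_add, mul_comm k₁ (a' + 1), hD]
      have hzpow : z ^ (b' + 1) = t₂ ^ (b' + 1) * g ^ ((b' + 1) * k₂) := by
        rw [hz, mul_pow, ← pow_mul, mul_comm k₂ (b' + 1)]
      rw [hxpow, hzpow, hMdef]; ring
    have hEgM : (p : ℤ) ^ E ∣ g ^ ((b' + 1) * k₂) * M := by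
      rw [← hident]; exact dvd_sub hE1 hE2
    have hEle : E ≤ ((b' + 1) * k₂) * g.natAbs.factorization p + M.natAbs.factorization p := by
      have h := (intCast_pow_dvd_iff hp E
        (mul_ne_zero (pow_ne_zero _ hg0) hM)).mp hEgM
      rwa [Int.natAbs_mul, Int.natAbs_pow,
        Nat.factorization_mul (pow_ne_zero _ (Int.natAbs_ne_zero.mpr hg0))
          (Int.natAbs_ne_zero.mpr hM),
        Nat.factorization_pow, Finsupp.coe_add, Pi.add_apply, Finsupp.smul_apply,
        smul_eq_mul] at h
    have hβ₂eq : β₂ = t₂.natAbs.factorization p + k₂ * g.natAbs.factorization p := by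
      rw [hβ₂, hz, Int.natAbs_mul, Int.natAbs_pow,
        Nat.factorization_mul (Int.natAbs_ne_zero.mpr ht₂)
          (pow_ne_zero _ (Int.natAbs_ne_zero.mpr hg0)),
        Nat.factorization_pow, Finsupp.coe_add, Pi.add_apply, Finsupp.smul_apply,
        smul_eq_mul]
    have hβ₂w : β₂ ≤ w₂.natAbs.factorization p := (intCast_pow_dvd_iff hp β₂ hw₂).mp hpβ₂w
    -- conclude with arithmetic
    have hmul : ((b' + 1) * k₂) * g.natAbs.factorization p ≤ (b' + 1) * β₂ := by
      rw [mul_assoc]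
      exact Nat.mul_le_mul_left _ (by omega)
    have hfin : e ≤ w₂.natAbs.factorization p + M.natAbs.factorization p := by
      have h3 : E ≤ (b' + 1) * β₂ + M.natAbs.factorization p := le_trans hEle (by omega)
      have h4 : (b' + 1) * β₂ = b' * β₂ + β₂ := by ring
      rw [hE] at h3
      generalize a' * β₁ = A at h3
      generalize hBB : b' * β₂ = B at h3 h4
      omega
    omega
  · simp [Nat.factorization_eq_zero_of_not_prime _ hp]

-- generic: from Δ ≤ 2*C^n (ints) to the real bound
lemma final_cast (Δn : ℕ) (C : ℤ) (n : ℕ) (X : ℝ) (hC2 : 2 ≤ C)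
    (hInt : (Δn : ℤ) ≤ 2 * C ^ n)
    (hexp : (n : ℝ) ≤ 2 + 5 * Real.sqrt X) :
    (Δn : ℝ) ≤ 2 * (C : ℝ) ^ ((2 : ℝ) + 5 * Real.sqrt X) := by
  have hC1 : (1 : ℝ) ≤ (C : ℝ) := by exact_mod_cast (by omega : (1:ℤ) ≤ C)
  have h1 : (Δn : ℝ) ≤ 2 * (C : ℝ) ^ n := by exact_mod_cast hInt
  have h2 : (C : ℝ) ^ n = (C : ℝ) ^ ((n : ℕ) : ℝ) := (Real.rpow_natCast _ _).symm
  have h3 : (C : ℝ) ^ ((n : ℕ) : ℝ) ≤ (C : ℝ) ^ ((2 : ℝ) + 5 * Real.sqrt X) :=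
    Real.rpow_le_rpow_of_exponent_le hC1 hexp
  calc (Δn : ℝ) ≤ 2 * (C : ℝ) ^ n := h1
    _ = 2 * (C : ℝ) ^ ((n : ℕ) : ℝ) := by rw [h2]
    _ ≤ 2 * (C : ℝ) ^ ((2 : ℝ) + 5 * Real.sqrt X) := by linarith

lemma easy_bound (Δn : ℕ) (d t w g C : ℤ) (k : ℕ) (X : ℝ)
    (hdvd : (Δn : ℤ) ∣ d) (hd : d ≠ 0) (hdef : d = t * g ^ k - w)
    (hg : 2 ≤ g) (htC : |t| ≤ C) (hwC : |w| ≤ C) (hgC : g ≤ C)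
    (hk : (k : ℝ) ≤ 1 + 5 * Real.sqrt X) :
    (Δn : ℝ) ≤ 2 * (C : ℝ) ^ ((2 : ℝ) + 5 * Real.sqrt X) := by
  have hC2 : 2 ≤ C := le_trans hg hgC
  have hΔd : (Δn : ℤ) ≤ |d| := Int.le_of_dvd (abs_pos.mpr hd) (dvd_abs _ _ |>.mpr hdvd)
  have hdb : |d| ≤ 2 * C ^ (k + 1) := by
    rw [hdef]
    have h1 : |t * g ^ k - w| ≤ |t| * g ^ k + |w| := by
      calc |t * g ^ k - w| ≤ |t * g ^ k| + |w| := abs_sub _ _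
        _ = |t| * g ^ k + |w| := by
            rw [abs_mul, abs_pow, abs_of_nonneg (by omega : (0:ℤ) ≤ g)]
    have hgk : g ^ k ≤ C ^ k := pow_le_pow_left₀ (by omega) hgC k
    have hCk1 : (1 : ℤ) ≤ C ^ k := one_le_pow₀ (by omega)
    have h2 : |t| * g ^ k ≤ C * C ^ k := by
      apply mul_le_mul htC hgk (by positivity) (by omega)
    have h3 : |w| ≤ C * C ^ k := by
      calc |w| ≤ C := hwC
        _ = C * 1 := by ring
        _ ≤ C * C ^ k := by
            apply mul_le_mul_of_nonneg_left hCk1 (by omega)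
    calc |t * g ^ k - w| ≤ |t| * g ^ k + |w| := h1
      _ ≤ C * C ^ k + C * C ^ k := add_le_add h2 h3
      _ = 2 * C ^ (k + 1) := by ring
  apply final_cast Δn C (k + 1) X hC2 (le_trans hΔd hdb)
  push_cast
  linarith

lemma hard_bound (g t₁ w₁ t₂ w₂ C : ℤ) (k₁ k₂ a b D : ℕ) (X : ℝ)
    (hg : 2 ≤ g) (ht₁ : t₁ ≠ 0) (hw₁ : w₁ ≠ 0) (ht₂ : t₂ ≠ 0) (hw₂ : w₂ ≠ 0)
    (ht₁C : |t₁| ≤ C) (hw₁C : |w₁| ≤ C) (ht₂C : |t₂| ≤ C) (hw₂C : |w₂| ≤ C)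
    (hgC : g ≤ C)
    (ha : 1 ≤ a) (hb : 1 ≤ b) (hD : a * k₁ = b * k₂ + D)
    (hd₁ : t₁ * g ^ k₁ - w₁ ≠ 0)
    (hM : t₁ ^ a * w₂ ^ b * g ^ D - w₁ ^ a * t₂ ^ b ≠ 0)
    (haR : (a : ℝ) ≤ Real.sqrt X) (hbR : (b : ℝ) ≤ Real.sqrt X)
    (hDR : (D : ℝ) ≤ 3 * Real.sqrt X) :
    ((Int.gcd (t₁ * g ^ k₁ - w₁) (t₂ * g ^ k₂ - w₂) : ℕ) : ℝ) ≤
      2 * (C : ℝ) ^ ((2 : ℝ) + 5 * Real.sqrt X) := by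
  have hC2 : 2 ≤ C := le_trans hg hgC
  have hC0 : (0 : ℤ) ≤ C := by omega
  have hg0 : (0 : ℤ) ≤ g := by omega
  set M := t₁ ^ a * w₂ ^ b * g ^ D - w₁ ^ a * t₂ ^ b with hMdef
  have hdvd := core_dvd g t₁ w₁ t₂ w₂ k₁ k₂ a b D hg ht₁ hw₁ ht₂ hw₂ ha hb hD hd₁ hM
  have hN0 : w₁ * (w₂ * M) ≠ 0 := mul_ne_zero hw₁ (mul_ne_zero hw₂ hM)
  have hΔle : ((Int.gcd (t₁ * g ^ k₁ - w₁) (t₂ * g ^ k₂ - w₂) : ℕ) : ℤ) ≤ |w₁ * (w₂ * M)| :=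
    Int.le_of_dvd (abs_pos.mpr hN0) ((dvd_abs _ _).mpr hdvd)
  -- |M| ≤ 2 * C^(a+b+D)
  have hMb : |M| ≤ 2 * C ^ (a + b + D) := by
    have h1 : |M| ≤ |t₁| ^ a * |w₂| ^ b * g ^ D + |w₁| ^ a * |t₂| ^ b := by
      calc |M| ≤ |t₁ ^ a * w₂ ^ b * g ^ D| + |w₁ ^ a * t₂ ^ b| := abs_sub _ _
        _ = |t₁| ^ a * |w₂| ^ b * g ^ D + |w₁| ^ a * |t₂| ^ b := by
            rw [abs_mul, abs_mul, abs_mul, abs_pow, abs_pow, abs_pow, abs_pow, abs_pow,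
              abs_of_nonneg hg0]
    have hta : |t₁| ^ a ≤ C ^ a := pow_le_pow_left₀ (abs_nonneg _) ht₁C a
    have hwb : |w₂| ^ b ≤ C ^ b := pow_le_pow_left₀ (abs_nonneg _) hw₂C b
    have hgD : g ^ D ≤ C ^ D := pow_le_pow_left₀ hg0 hgC D
    have hwa : |w₁| ^ a ≤ C ^ a := pow_le_pow_left₀ (abs_nonneg _) hw₁C a
    have htb : |t₂| ^ b ≤ C ^ b := pow_le_pow_left₀ (abs_nonneg _) ht₂C b
    have hCD1 : (1 : ℤ) ≤ C ^ D := one_le_pow₀ (by omega)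
    have h2 : |t₁| ^ a * |w₂| ^ b * g ^ D ≤ C ^ a * C ^ b * C ^ D := by
      apply mul_le_mul (mul_le_mul hta hwb (by positivity) (by positivity))
        hgD (by positivity) (by positivity)
    have h3 : |w₁| ^ a * |t₂| ^ b ≤ C ^ a * C ^ b * C ^ D := by
      calc |w₁| ^ a * |t₂| ^ b ≤ C ^ a * C ^ b :=
            mul_le_mul hwa htb (by positivity) (by positivity)
        _ = C ^ a * C ^ b * 1 := by ring
        _ ≤ C ^ a * C ^ b * C ^ D := by
            apply mul_le_mul_of_nonneg_left hCD1 (by positivity)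
    calc |M| ≤ |t₁| ^ a * |w₂| ^ b * g ^ D + |w₁| ^ a * |t₂| ^ b := h1
      _ ≤ C ^ a * C ^ b * C ^ D + C ^ a * C ^ b * C ^ D := add_le_add h2 h3
      _ = 2 * C ^ (a + b + D) := by rw [← pow_add, ← pow_add]; ring
  have hNb : |w₁ * (w₂ * M)| ≤ 2 * C ^ (2 + (a + b + D)) := by
    rw [abs_mul, abs_mul]
    calc |w₁| * (|w₂| * |M|) ≤ C * (C * (2 * C ^ (a + b + D))) := by
          apply mul_le_mul hw₁C _ (by positivity) hC0
          apply mul_le_mul hw₂C hMb (abs_nonneg _) hC0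
      _ = 2 * C ^ (2 + (a + b + D)) := by rw [pow_add]; ring
  apply final_cast _ C (2 + (a + b + D)) X hC2 (le_trans hΔle hNb)
  push_cast
  have h0 : (0:ℝ) ≤ Real.sqrt X := Real.sqrt_nonneg X
  linarith

set_option maxHeartbeats 2000000 in
theorem stmt_3 (g : ℤ) (hg : 2 ≤ g) (k₁ k₂ : ℕ) (hk₁ : 1 ≤ k₁) (hk₂ : 1 ≤ k₂)
    (t₁ w₁ t₂ w₂ : ℤ) (ht₁ : t₁ ≠ 0) (hw₁ : w₁ ≠ 0) (ht₂ : t₂ ≠ 0) (hw₂ : w₂ ≠ 0)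
    (C : ℤ) (hC : C = max (max g |t₁|) (max (max |w₁| |t₂|) |w₂|))
    (X : ℝ) (hX : max (max (k₁ : ℝ) (k₂ : ℝ)) 3 ≤ X)
    (hind : MultIndep ((t₁ * g ^ k₁ : ℤ) / (w₁ : ℚ)) ((t₂ * g ^ k₂ : ℤ) / (w₂ : ℚ))) :
    (Int.gcd (t₁ * g ^ k₁ - w₁) (t₂ * g ^ k₂ - w₂) : ℝ) ≤
      2 * (C : ℝ) ^ ((2 : ℝ) + 5 * Real.sqrt X) := by
  have hind' : MultIndep ((t₂ * g ^ k₂ : ℤ) / (w₂ : ℚ)) ((t₁ * g ^ k₁ : ℤ) / (w₁ : ℚ)) :=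
    multIndep_symm hind
  set s : ℝ := Real.sqrt X with hsdef
  have hs0 : 0 ≤ s := Real.sqrt_nonneg X
  have hX3 : (3 : ℝ) ≤ X := le_trans (le_max_right _ _) hX
  have hX0 : (0 : ℝ) ≤ X := by linarith
  have hss : s * s = X := Real.mul_self_sqrt hX0
  have hXk₁ : (k₁ : ℝ) ≤ X := le_trans (le_trans (le_max_left _ _) (le_max_left _ _)) hX
  have hXk₂ : (k₂ : ℝ) ≤ X := le_trans (le_trans (le_max_right _ _) (le_max_left _ _)) hX
  have hs1 : 1 ≤ s := by nlinarith
  have hd₁ : t₁ * g ^ k₁ - w₁ ≠ 0 := d_ne_zero hw₁ hind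
  have hd₂ : t₂ * g ^ k₂ - w₂ ≠ 0 := d_ne_zero hw₂ hind'
  have hgC : g ≤ C := by rw [hC]; omega
  have ht₁C : |t₁| ≤ C := by rw [hC]; omega
  have hw₁C : |w₁| ≤ C := by rw [hC]; omega
  have ht₂C : |t₂| ≤ C := by rw [hC]; omega
  have hw₂C : |w₂| ≤ C := by rw [hC]; omega
  by_cases hek₁ : (k₁ : ℝ) ≤ 5 * s
  · exact easy_bound _ _ t₁ w₁ g C k₁ X (Int.gcd_dvd_left _ _) hd₁ rfl hg ht₁C hw₁C hgC
      (by linarith)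
  by_cases hek₂ : (k₂ : ℝ) ≤ 5 * s
  · rw [Int.gcd_comm]
    exact easy_bound _ _ t₂ w₂ g C k₂ X (Int.gcd_dvd_left _ _) hd₂ rfl hg ht₂C hw₂C hgC
      (by linarith)
  push_neg at hek₁ hek₂
  have hs5 : 5 < s := by nlinarith
  set m : ℕ := ⌊s⌋₊ with hmdef
  set T : ℕ := ⌊2 * s⌋₊ + 1 with hTdef
  have hm_le : (m : ℝ) ≤ s := Nat.floor_le hs0
  have hm_gt : s < (m : ℝ) + 1 := Nat.lt_floor_add_one s
  have hT_gt : 2 * s < (T : ℝ) := by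
    have := Nat.lt_floor_add_one (2 * s); rw [hTdef]; push_cast; linarith
  have hT_le : (T : ℝ) ≤ 2 * s + 1 := by
    have := Nat.floor_le (by linarith : (0:ℝ) ≤ 2 * s); rw [hTdef]; push_cast; linarith
  have hm5 : 5 ≤ m := by
    have h : (5 : ℝ) < (m : ℝ) + 1 := by linarith
    have h2 : (5 : ℕ) < m + 1 := by exact_mod_cast h
    omega
  have hT0 : 0 < T := Nat.succ_pos _
  have hTk₁ : T < k₁ := by
    have : (T : ℝ) < (k₁ : ℝ) := by linarith
    exact_mod_cast this
  have hTk₂ : T < k₂ := by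
    have : (T : ℝ) < (k₂ : ℝ) := by linarith
    exact_mod_cast this
  have hcard : m * (k₁ + k₂) < (m * m + 2 * m) * T := by
    have hm0 : (1 : ℝ) ≤ (m : ℝ) := by exact_mod_cast Nat.one_le_iff_ne_zero.mpr (by omega)
    have hcardR : (m : ℝ) * ((k₁ : ℝ) + (k₂ : ℝ)) < ((m : ℝ) * m + 2 * m) * (T : ℝ) := by
      have h1 : (m : ℝ) * ((k₁ : ℝ) + (k₂ : ℝ)) ≤ (m : ℝ) * (2 * (s * s)) := by
        apply mul_le_mul_of_nonneg_left _ (by linarith)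
        rw [hss]; linarith
      have h3 : (m : ℝ) * s < (m : ℝ) * ((m : ℝ) + 2) :=
        mul_lt_mul_of_pos_left (by linarith) (by linarith)
      have h4 : (2 * s) * ((m : ℝ) * s) < (2 * s) * ((m : ℝ) * ((m : ℝ) + 2)) :=
        mul_lt_mul_of_pos_left h3 (by linarith)
      have h5 : (2 * s) * ((m : ℝ) * ((m : ℝ) + 2)) < (T : ℝ) * ((m : ℝ) * ((m : ℝ) + 2)) :=
        mul_lt_mul_of_pos_right hT_gt (by nlinarith)
      nlinarith
    exact_mod_cast hcardR
  obtain ⟨A, B, hAB, hAm, hBm, habs⟩ := pigeon k₁ k₂ m T hT0 hcard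
  -- normalization: reduce to the case 0 ≤ A
  suffices key : ∀ A B : ℤ, (A ≠ 0 ∨ B ≠ 0) → |A| ≤ m → |B| ≤ m →
      |A * k₁ - B * k₂| < T → 0 ≤ A →
      (Int.gcd (t₁ * g ^ k₁ - w₁) (t₂ * g ^ k₂ - w₂) : ℝ) ≤
        2 * (C : ℝ) ^ ((2 : ℝ) + 5 * Real.sqrt X) by
    rcases le_or_gt 0 A with hA0 | hA0
    · exact key A B hAB hAm hBm habs hA0
    · refine key (-A) (-B) (by omega) (by rwa [abs_neg]) (by rwa [abs_neg]) ?_ (by omega)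
      have : -A * (k₁ : ℤ) - -B * k₂ = -(A * k₁ - B * k₂) := by ring
      rwa [this, abs_neg]
  intro A B hAB hAm hBm habs hA0
  have hk₁0 : (0 : ℤ) < (k₁ : ℤ) := by exact_mod_cast hk₁
  have hk₂0 : (0 : ℤ) < (k₂ : ℤ) := by exact_mod_cast hk₂
  have hA1 : 1 ≤ A := by
    rcases eq_or_lt_of_le hA0 with hA | hA
    · exfalso
      have hB0 : B ≠ 0 := by tauto
      have h1 : |A * k₁ - B * k₂| = |B| * k₂ := by
        rw [← hA]; simp [abs_mul]
      have h2 : 1 ≤ |B| := by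
        rcases hB0.lt_or_gt with h | h
        · rw [abs_of_neg h]; omega
        · rw [abs_of_pos h]; omega
      have h3 : (k₂ : ℤ) ≤ |B| * k₂ := le_mul_of_one_le_left (by omega) h2
      have hTk₂' : (T : ℤ) < (k₂ : ℤ) := by exact_mod_cast hTk₂
      linarith
    · omega
  have hB1 : 1 ≤ B := by
    by_contra hB
    push_neg at hB
    have hB0 : B ≤ 0 := by omega
    have h1 : (k₁ : ℤ) ≤ A * k₁ - B * k₂ := by
      have h2 : (k₁ : ℤ) ≤ A * k₁ := le_mul_of_one_le_left (by omega) hA1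
      have h3 : (0 : ℤ) ≤ -B * k₂ := mul_nonneg (by omega) (by omega)
      linarith
    have hTk₁' : (T : ℤ) < (k₁ : ℤ) := by exact_mod_cast hTk₁
    have h4 : A * k₁ - B * k₂ ≤ |A * k₁ - B * k₂| := le_abs_self _
    linarith
  set a : ℕ := A.toNat with hadef
  set b : ℕ := B.toNat with hbdef
  have hAa : (a : ℤ) = A := Int.toNat_of_nonneg hA0
  have hBb : (b : ℤ) = B := Int.toNat_of_nonneg (by omega)
  have ha1 : 1 ≤ a := by omega
  have hb1 : 1 ≤ b := by omega
  have ham : a ≤ m := by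
    have : A ≤ m := by rw [abs_le] at hAm; exact hAm.2
    omega
  have hbm : b ≤ m := by
    have : B ≤ m := by rw [abs_le] at hBm; exact hBm.2
    omega
  have haR : (a : ℝ) ≤ s := by
    have : (a : ℝ) ≤ (m : ℝ) := by exact_mod_cast ham
    linarith
  have hbR : (b : ℝ) ≤ s := by
    have : (b : ℝ) ≤ (m : ℝ) := by exact_mod_cast hbm
    linarith
  rcases le_or_gt 0 (A * k₁ - B * k₂) with hDpos | hDneg
  · set D : ℕ := (A * k₁ - B * k₂).toNat with hDdef
    have hDD : (D : ℤ) = A * k₁ - B * k₂ := Int.toNat_of_nonneg hDpos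
    have hD : a * k₁ = b * k₂ + D := by
      have : (a : ℤ) * k₁ = (b : ℤ) * k₂ + (D : ℤ) := by
        rw [hAa, hBb, hDD]; ring
      exact_mod_cast this
    have hDltT : D < T := by
      have h : (D : ℤ) < T := by
        rw [hDD]
        calc A * (k₁ : ℤ) - B * k₂ ≤ |A * (k₁ : ℤ) - B * k₂| := le_abs_self _
          _ < T := habs
      exact_mod_cast h
    have hDR : (D : ℝ) ≤ 3 * s := by
      have h1 : (D : ℝ) < (T : ℝ) := by exact_mod_cast hDltT
      linarith
    have hM := M_ne_zero (a := a) (b := b) (D := D) hg ht₁ hw₁ ht₂ hw₂ ha1 hD hind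
    exact hard_bound g t₁ w₁ t₂ w₂ C k₁ k₂ a b D X hg ht₁ hw₁ ht₂ hw₂
      ht₁C hw₁C ht₂C hw₂C hgC ha1 hb1 hD hd₁ hM haR hbR hDR
  · set D : ℕ := (B * k₂ - A * k₁).toNat with hDdef
    have hDD : (D : ℤ) = B * k₂ - A * k₁ := Int.toNat_of_nonneg (by omega)
    have hD : b * k₂ = a * k₁ + D := by
      have : (b : ℤ) * k₂ = (a : ℤ) * k₁ + (D : ℤ) := by
        rw [hAa, hBb, hDD]; ring
      exact_mod_cast this
    have hDltT : D < T := by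
      have h : (D : ℤ) < T := by
        rw [hDD]
        have hneg : B * (k₂ : ℤ) - A * k₁ = -(A * (k₁ : ℤ) - B * k₂) := by ring
        rw [hneg]
        calc -(A * (k₁ : ℤ) - B * k₂) ≤ |A * (k₁ : ℤ) - B * k₂| := neg_le_abs _
          _ < T := habs
      exact_mod_cast h
    have hDR : (D : ℝ) ≤ 3 * s := by
      have h1 : (D : ℝ) < (T : ℝ) := by exact_mod_cast hDltT
      linarith
    have hM := M_ne_zero (a := b) (b := a) (D := D) hg ht₂ hw₂ ht₁ hw₁ hb1 hD hind'
    rw [Int.gcd_comm]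
    exact hard_bound g t₂ w₂ t₁ w₁ C k₂ k₁ b a D X hg ht₂ hw₂ ht₁ hw₁
      ht₂C hw₂C ht₁C hw₁C hgC hb1 ha1 hD hd₂ hM hbR haR hDR
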